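/- If G is the complete graph K_n with n ≥ 2, then the bondage number of G equals ⌈n/2⌉. -/

import Mathlib

open SimpleGraph

section Defs
variable {V : Type*}

/-- `S` is a dominating set of `G`. -/
def Dominates (G : SimpleGraph V) (S : Set V) : Prop :=
  ∀ v : V, v ∈ S ∨ ∃ u ∈ S, G.Adj u v

/-- The domination number `γ(G)`. -/
noncomputable def domNum (G : SimpleGraph V) [Fintype V] : ℕ :=
  sInf {n | ∃ S : Finset V, S.card = n ∧ Dominates G ↑S}

/-- The bondage number `b(G)`. -/
noncomputable def bondageNum (G : SimpleGraph V) [Fintype V] : ℕ :=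
  sInf {n | ∃ A : Finset (Sym2 V), ↑A ⊆ G.edgeSet ∧ A.card = n ∧
    domNum (G.deleteEdges ↑A) = domNum G + 1}

/-- The clique number `ω(G)`. -/
noncomputable def cliqueNum' (G : SimpleGraph V) [Fintype V] : ℕ :=
  sSup {n | ∃ s : Finset V, G.IsNClique n s}

/-- The degree of a vertex. -/
noncomputable def vdeg (G : SimpleGraph V) (v : V) : ℕ := (G.neighborSet v).ncard

/-- The maximum degree `Δ(G)`. -/
noncomputable def maxDeg (G : SimpleGraph V) [Fintype V] : ℕ :=
  sSup {d | ∃ v, vdeg G v = d}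

/-- A chordal graph: no induced cycle of length at least 4. -/
def Chordal (G : SimpleGraph V) : Prop :=
  ∀ n, 4 ≤ n → IsEmpty (cycleGraph n ↪g G)

/-- The corona `G ∘ K₁`: attach a pendant vertex to each vertex of `G`. -/
def coronaK1 (G : SimpleGraph V) : SimpleGraph (V ⊕ V) :=
  SimpleGraph.fromRel (fun a b =>
    (∃ u v, a = Sum.inl u ∧ b = Sum.inl v ∧ G.Adj u v) ∨
    (∃ u, a = Sum.inl u ∧ b = Sum.inr u))

end Defs

section Aux

lemma domNum_top_eq_one (n : ℕ) (hn : 1 ≤ n) :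
    domNum (⊤ : SimpleGraph (Fin n)) = 1 := by
  have h1 : 1 ∈ {m | ∃ S : Finset (Fin n), S.card = m ∧ Dominates ⊤ (S : Set (Fin n))} := by
    refine ⟨{⟨0, hn⟩}, Finset.card_singleton _, fun v => ?_⟩
    by_cases h : v = ⟨0, hn⟩
    · exact Or.inl (by simp [h])
    · exact Or.inr ⟨⟨0, hn⟩, by simp, fun he => h he.symm⟩
  refine le_antisymm (Nat.sInf_le h1) ?_
  rw [Nat.one_le_iff_ne_zero]
  intro h0
  have := Nat.sInf_mem (⟨1, h1⟩ : Set.Nonempty _)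
  rw [domNum] at h0
  rw [h0] at this
  obtain ⟨S, hS, hdom⟩ := this
  rw [Finset.card_eq_zero] at hS
  subst hS
  rcases hdom ⟨0, hn⟩ with h | ⟨u, hu, _⟩ <;> simp_all


section Main

lemma dominates_univ {V : Type*} [Fintype V] (G : SimpleGraph V) :
    Dominates G ((Finset.univ : Finset V) : Set V) := by
  intro v; exact Or.inl (by simp)

lemma domNum_eq_two {V : Type*} [Fintype V] [DecidableEq V] (G : SimpleGraph V)
    (h2 : ∃ S : Finset V, S.card = 2 ∧ Dominates G (S : Set V))
    (h1 : ∀ v : V, ¬ Dominates G {v}) (h0 : ¬ Dominates G (∅ : Set V)) :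
    domNum G = 2 := by
  obtain ⟨S, hScard, hSdom⟩ := h2
  refine le_antisymm (Nat.sInf_le ⟨S, hScard, hSdom⟩) ?_
  by_contra hlt
  push_neg at hlt
  have hmem := Nat.sInf_mem (⟨2, S, hScard, hSdom⟩ :
    Set.Nonempty {m | ∃ S : Finset V, S.card = m ∧ Dominates G (S : Set V)})
  rw [domNum] at hlt
  obtain ⟨T, hTcard, hTdom⟩ := hmem
  interval_cases h : sInf {m | ∃ S : Finset V, S.card = m ∧ Dominates G (S : Set V)}
  · rw [Finset.card_eq_zero] at hTcard
    subst hTcard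
    exact h0 (by simpa using hTdom)
  · rw [Finset.card_eq_one] at hTcard
    obtain ⟨v, rfl⟩ := hTcard
    exact h1 v (by simpa using hTdom)

lemma card_bound {n : ℕ} [DecidableEq (Fin n)] (A : Finset (Sym2 (Fin n)))
    (hcov : ∀ v : Fin n, ∃ e ∈ A, v ∈ e) : n ≤ 2 * A.card := by
  classical
  have hsub : (Finset.univ : Finset (Fin n)) ⊆
      A.biUnion (fun e => Finset.univ.filter (· ∈ e)) := by
    intro v _
    obtain ⟨e, he, hv⟩ := hcov v
    exact Finset.mem_biUnion.2 ⟨e, he, by simp [hv]⟩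
  calc n = (Finset.univ : Finset (Fin n)).card := by simp
    _ ≤ (A.biUnion (fun e => Finset.univ.filter (· ∈ e))).card := Finset.card_le_card hsub
    _ ≤ ∑ e ∈ A, (Finset.univ.filter (· ∈ e)).card := Finset.card_biUnion_le
    _ ≤ ∑ _e ∈ A, 2 := by
        refine Finset.sum_le_sum fun e _ => ?_
        induction e with
        | h a b =>
          refine (Finset.card_le_card (fun x hx => ?_)).trans
            ((Finset.card_insert_le a {b}).trans (by simp))
          simp only [Finset.mem_filter, Sym2.mem_iff] at hx
          rcases hx.2 with rfl | rfl <;> simp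
    _ = 2 * A.card := by rw [Finset.sum_const, smul_eq_mul, mul_comm]

end Main

open Fin.NatCast

/-- `b(K_n) = ⌈n/2⌉` for `n ≥ 2`. -/
theorem bondage_complete (n : ℕ) (hn : 2 ≤ n) :
    bondageNum (⊤ : SimpleGraph (Fin n)) = (n + 1) / 2 := by
  haveI : NeZero n := ⟨by omega⟩
  classical
  set k := (n + 1) / 2 with hk
  set f : ℕ → Sym2 (Fin n) := fun i => s(((2*i : ℕ) : Fin n), ((2*i+1 : ℕ) : Fin n)) with hf
  -- the Fin-val characterization of edges
  have hval : ∀ i < k, ((2*i : ℕ) : Fin n).val = 2*i ∧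
      (((2*i+1 : ℕ) : Fin n).val = 2*i+1 ∨ (((2*i+1 : ℕ) : Fin n).val = 0 ∧ 2*i+1 = n)) := by
    intro i hi
    have h2i : 2*i < n := by omega
    constructor
    · rw [Fin.val_natCast]; exact Nat.mod_eq_of_lt h2i
    · rcases Nat.lt_or_ge (2*i+1) n with h | h
      · exact Or.inl (by rw [Fin.val_natCast]; exact Nat.mod_eq_of_lt h)
      · have : 2*i+1 = n := by omega
        exact Or.inr ⟨by rw [Fin.val_natCast, this, Nat.mod_self], this⟩
  set A : Finset (Sym2 (Fin n)) := (Finset.range k).image f with hA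
  have hmemA : ∀ e, e ∈ A ↔ ∃ i < k, f i = e := by
    intro e; simp [hA, Finset.mem_image]
  -- A consists of genuine edges
  have hAedge : (A : Set (Sym2 (Fin n))) ⊆ (⊤ : SimpleGraph (Fin n)).edgeSet := by
    intro e he
    rw [Finset.mem_coe, hmemA] at he
    obtain ⟨i, hi, rfl⟩ := he
    obtain ⟨h1, h2⟩ := hval i hi
    simp only [hf, SimpleGraph.mem_edgeSet, SimpleGraph.top_adj]
    intro hcon
    have := congrArg Fin.val hcon
    omega
  -- cardinality of A
  have hAcard : A.card = k := by
    rw [hA, Finset.card_image_of_injOn, Finset.card_range]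
    intro i hi j hj hij
    simp only [Finset.mem_coe, Finset.mem_range] at hi hj
    obtain ⟨hi1, hi2⟩ := hval i hi
    obtain ⟨hj1, hj2⟩ := hval j hj
    simp only [hf, Sym2.eq_iff] at hij
    rcases hij with ⟨ha, hb⟩ | ⟨ha, hb⟩ <;>
      [(have := congrArg Fin.val ha; have := congrArg Fin.val hb);
       (have := congrArg Fin.val ha; have := congrArg Fin.val hb)] <;> omega
  -- A covers every vertex
  have hcov : ∀ v : Fin n, ∃ e ∈ A, v ∈ e := by
    intro v
    rcases Nat.even_or_odd v.val with ⟨i, hi⟩ | ⟨i, hi⟩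
    · refine ⟨f i, (hmemA _).2 ⟨i, by omega, rfl⟩, ?_⟩
      have := (hval i (by omega)).1
      rw [hf, Sym2.mem_iff]
      left; exact Fin.ext (by omega)
    · refine ⟨f i, (hmemA _).2 ⟨i, by omega, rfl⟩, ?_⟩
      have := (hval i (by omega)).2
      rw [hf, Sym2.mem_iff]
      right; refine Fin.ext ?_
      have hv := v.isLt
      omega
  have hdomtop : domNum (⊤ : SimpleGraph (Fin n)) = 1 := domNum_top_eq_one n (by omega)
  -- no singleton dominates after deleting a covering edge set
  have hsingle : ∀ (A' : Finset (Sym2 (Fin n))),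
      (↑A' ⊆ (⊤ : SimpleGraph (Fin n)).edgeSet) →
      (∀ v : Fin n, ∃ e ∈ A', v ∈ e) → ∀ u : Fin n,
      ¬ Dominates ((⊤ : SimpleGraph (Fin n)).deleteEdges ↑A') {u} := by
    intro A' hsub hcov' u hdom
    obtain ⟨e, he, hu⟩ := hcov' u
    set w := Sym2.Mem.other hu with hw
    have hspec : s(u, w) = e := Sym2.other_spec hu
    have hnd : ¬ e.IsDiag := by
      have := hsub (Finset.mem_coe.2 he)
      simpa [SimpleGraph.edgeSet_top] using this
    have hne : u ≠ w := by
      intro h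
      exact hnd (by rw [← hspec, h]; simp)
    rcases hdom w with hmem | ⟨x, hx, hadj⟩
    · exact hne (Set.mem_singleton_iff.mp hmem).symm
    · rw [Set.mem_singleton_iff] at hx
      subst hx
      rw [SimpleGraph.deleteEdges_adj] at hadj
      exact hadj.2 (by rw [hspec]; exact he)
  -- empty set never dominates
  have hempty : ¬ Dominates ((⊤ : SimpleGraph (Fin n)).deleteEdges ↑A) (∅ : Set (Fin n)) := by
    intro h
    rcases h ⟨0, by omega⟩ with h' | ⟨x, hx, _⟩
    · exact absurd h' (Set.notMem_empty _)
    · exact absurd hx (Set.notMem_empty _)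
  -- the two special vertices
  set v0 : Fin n := ((0 : ℕ) : Fin n) with hv0def
  set v1 : Fin n := ((1 : ℕ) : Fin n) with hv1def
  have hv0 : v0.val = 0 := by rw [hv0def]; simp
  have hv1 : v1.val = 1 := by rw [hv1def, Fin.val_natCast]; exact Nat.mod_eq_of_lt (by omega)
  have hv01 : v0 ≠ v1 := by intro h; have := congrArg Fin.val h; omega
  -- {v0, v1} dominates the deleted graph
  have hdom2 : Dominates ((⊤ : SimpleGraph (Fin n)).deleteEdges ↑A)
      (({v0, v1} : Finset (Fin n)) : Set (Fin n)) := by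
    intro v
    by_cases h0 : v = v0
    · left; simp [h0]
    by_cases h1 : v = v1
    · left; simp [h1]
    right
    have hvlt := v.isLt
    by_cases hc : s(v0, v) ∈ A
    · -- then s(v1, v) ∉ A
      obtain ⟨i, hi, hfi⟩ := (hmemA _).1 hc
      obtain ⟨hi1, hi2⟩ := hval i hi
      simp only [hf, Sym2.eq_iff] at hfi
      have hvval : v.val = n - 1 ∧ 2*i + 1 = n := by
        rcases hfi with ⟨ha, hb⟩ | ⟨ha, hb⟩
        · exfalso
          have ha' := congrArg Fin.val ha
          have hb' := congrArg Fin.val hb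
          rw [hv0] at ha'
          apply h1
          apply Fin.ext
          rw [hv1]
          omega
        · have ha' := congrArg Fin.val ha
          have hb' := congrArg Fin.val hb
          rw [hv0] at hb'
          exact ⟨by omega, by omega⟩
      have hnc : s(v1, v) ∉ A := by
        intro hc2
        obtain ⟨j, hj, hfj⟩ := (hmemA _).1 hc2
        obtain ⟨hj1, hj2⟩ := hval j hj
        simp only [hf, Sym2.eq_iff] at hfj
        rcases hfj with ⟨ha, hb⟩ | ⟨ha, hb⟩
        · have ha' := congrArg Fin.val ha
          rw [hv1] at ha'
          omega
        · have ha' := congrArg Fin.val ha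
          have hb' := congrArg Fin.val hb
          rw [hv1] at hb'
          omega
      refine ⟨v1, by simp, ?_⟩
      rw [SimpleGraph.deleteEdges_adj]
      refine ⟨?_, hnc⟩
      rw [SimpleGraph.top_adj]
      exact fun h => h1 h.symm
    · refine ⟨v0, by simp, ?_⟩
      rw [SimpleGraph.deleteEdges_adj]
      refine ⟨?_, hc⟩
      rw [SimpleGraph.top_adj]
      exact fun h => h0 h.symm
  have hdel : domNum ((⊤ : SimpleGraph (Fin n)).deleteEdges ↑A) = 2 := by
    refine domNum_eq_two _ ⟨{v0, v1}, ?_, hdom2⟩ (hsingle A hAedge hcov) hempty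
    rw [Finset.card_insert_of_notMem (by simp [hv01]), Finset.card_singleton]
  -- final computation
  have hmem : k ∈ {m | ∃ A' : Finset (Sym2 (Fin n)),
      ↑A' ⊆ (⊤ : SimpleGraph (Fin n)).edgeSet ∧ A'.card = m ∧
      domNum ((⊤ : SimpleGraph (Fin n)).deleteEdges ↑A') =
        domNum (⊤ : SimpleGraph (Fin n)) + 1} :=
    ⟨A, hAedge, hAcard, by rw [hdomtop, hdel]⟩
  rw [bondageNum]
  refine le_antisymm (Nat.sInf_le hmem) (le_csInf ⟨k, hmem⟩ ?_)
  rintro m ⟨A', hsub, rfl, hd⟩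
  rw [hdomtop] at hd
  have hcov' : ∀ v : Fin n, ∃ e ∈ A', v ∈ e := by
    by_contra hnc
    push_neg at hnc
    obtain ⟨v, hv⟩ := hnc
    have hdv : Dominates ((⊤ : SimpleGraph (Fin n)).deleteEdges ↑A')
        (({v} : Finset (Fin n)) : Set (Fin n)) := by
      intro u
      by_cases hu : u = v
      · left; simp [hu]
      · right
        refine ⟨v, by simp, ?_⟩
        rw [SimpleGraph.deleteEdges_adj]
        refine ⟨?_, fun hmem' => hv _ hmem' (Sym2.mem_mk_left v u)⟩
        rw [SimpleGraph.top_adj]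
        exact fun h => hu h.symm
    have hle : domNum ((⊤ : SimpleGraph (Fin n)).deleteEdges ↑A') ≤ 1 :=
      Nat.sInf_le ⟨{v}, Finset.card_singleton v, hdv⟩
    omega
  have := card_bound A' hcov'
  omega

end Aux
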